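/- There is no constant C > 0 such that for all (t, x) ∈ (0,1)×(0,1) one has t(1 - log(x²))/(1 + t²(1 - log(x²))) ≤ C^{1/2}. -/
import Mathlib


theorem not_good_metric_one_divisor :
    ¬ ∃ C : ℝ, 0 < C ∧ ∀ t x : ℝ, t ∈ Set.Ioo (0:ℝ) 1 → x ∈ Set.Ioo (0:ℝ) 1 →
      t * (1 - Real.log (x ^ 2)) / (1 + t ^ 2 * (1 - Real.log (x ^ 2))) ≤
        Real.sqrt C := by
  rintro ⟨C, hC, h⟩
  have hsC : 0 ≤ Real.sqrt C := Real.sqrt_nonneg C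
  set t : ℝ := min (1/2) (1/(2*(Real.sqrt C + 1))) with ht
  have ht0 : 0 < t := lt_min (by norm_num) (by positivity)
  have ht1 : t < 1 := lt_of_le_of_lt (min_le_left _ _) (by norm_num)
  set x : ℝ := Real.exp ((1 - 1/t^2)/2) with hx
  have hx0 : 0 < x := Real.exp_pos _
  have ht2 : (1:ℝ) < 1/t^2 := by
    rw [lt_div_iff₀ (by positivity)]
    nlinarith
  have hx1 : x < 1 := by
    rw [hx, Real.exp_lt_one_iff]
    linarith
  have hlog : Real.log (x ^ 2) = 1 - 1/t^2 := by
    rw [hx, ← Real.exp_nat_mul]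
    rw [Real.log_exp]
    ring
  have := h t x ⟨ht0, ht1⟩ ⟨hx0, hx1⟩
  rw [hlog] at this
  have hexpr : t * (1 - (1 - 1/t^2)) / (1 + t ^ 2 * (1 - (1 - 1/t^2))) = 1/(2*t) := by
    field_simp
    ring
  rw [hexpr] at this
  have htle : t ≤ 1/(2*(Real.sqrt C + 1)) := min_le_right _ _
  have : Real.sqrt C + 1 ≤ 1/(2*t) := by
    rw [le_div_iff₀ (by positivity)]
    calc (Real.sqrt C + 1) * (2*t) = 2*(Real.sqrt C + 1) * t := by ring
      _ ≤ 2*(Real.sqrt C + 1) * (1/(2*(Real.sqrt C + 1))) := by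
          apply mul_le_mul_of_nonneg_left htle (by positivity)
      _ = 1 := by field_simp
  linarith
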